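/- Weber's Bessel function of order zero, Y₀(x) = (2/π)[(ln(x/2) + γ) J₀(x) − ∑_{n=0}^∞ (−1)ⁿ φ(n) x²ⁿ / (2²ⁿ (n!)²)], is well defined and twice differentiable on (0,∞) and satisfies Bessel's equation of order zero: x Y₀''(x) + Y₀'(x) + x Y₀(x) = 0 for all x > 0. -/

import Mathlib

/-- The Bessel function of the first kind of order zero,
`J₀(x) = ∑ (−1)ⁿ x²ⁿ / (2²ⁿ (n!)²)`. -/
noncomputable def besselJ0 (x : ℝ) : ℝ :=
  ∑' n : ℕ, (-1 : ℝ) ^ n * x ^ (2 * n) / (2 ^ (2 * n) * ((n.factorial : ℝ)) ^ 2)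

/-- `φ(n) = ∑_{m=1}^n 1/m`, with `φ(0) = 0`. -/
noncomputable def harmonicPhi (n : ℕ) : ℝ :=
  ∑ m ∈ Finset.range n, (1 : ℝ) / (m + 1)

/-- Weber's Bessel function of order zero,
`Y₀(x) = (2/π)[(ln(x/2) + γ) J₀(x) − ∑ (−1)ⁿ φ(n) x²ⁿ / (2²ⁿ (n!)²)]`. -/
noncomputable def besselY0 (x : ℝ) : ℝ :=
  (2 / Real.pi) *
    ((Real.log (x / 2) + Real.eulerMascheroniConstant) * besselJ0 x -
      ∑' n : ℕ, (-1 : ℝ) ^ n * harmonicPhi n * x ^ (2 * n) /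
        (2 ^ (2 * n) * ((n.factorial : ℝ)) ^ 2))

/-- The modified Bessel function of the first kind of order zero,
`I₀(x) = ∑ x²ⁿ / (2²ⁿ (n!)²)`. -/
noncomputable def besselI0 (x : ℝ) : ℝ :=
  ∑' n : ℕ, x ^ (2 * n) / (2 ^ (2 * n) * ((n.factorial : ℝ)) ^ 2)

/-- The modified Bessel function of the second kind of order zero,
`K₀(x) = −(ln(x/2) + γ) I₀(x) + ∑ φ(n) x²ⁿ / (2²ⁿ (n!)²)`. -/
noncomputable def besselK0 (x : ℝ) : ℝ :=
  -(Real.log (x / 2) + Real.eulerMascheroniConstant) * besselI0 x +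
    ∑' n : ℕ, harmonicPhi n * x ^ (2 * n) / (2 ^ (2 * n) * ((n.factorial : ℝ)) ^ 2)

/-! ### Auxiliary power series machinery -/

namespace BesselAux

/-- Coefficients of `J₀` as a power series in `x`. -/
noncomputable def aco (n : ℕ) : ℝ :=
  if n % 2 = 0 then (-1 : ℝ) ^ (n / 2) / (4 ^ (n / 2) * ((n / 2).factorial : ℝ) ^ 2) else 0

/-- Coefficients of the harmonic-number companion series. -/
noncomputable def bco (n : ℕ) : ℝ :=
  if n % 2 = 0 then
    (-1 : ℝ) ^ (n / 2) * harmonicPhi (n / 2) / (4 ^ (n / 2) * ((n / 2).factorial : ℝ) ^ 2)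
  else 0

lemma aco_two_mul (m : ℕ) :
    aco (2 * m) = (-1 : ℝ) ^ m / (4 ^ m * ((m.factorial : ℝ)) ^ 2) := by
  simp [aco, Nat.mul_mod_right, Nat.mul_div_cancel_left _ (by norm_num : 0 < 2)]

lemma aco_odd (m : ℕ) : aco (2 * m + 1) = 0 := by
  simp [aco, Nat.mul_add_mod]

lemma bco_two_mul (m : ℕ) :
    bco (2 * m) = (-1 : ℝ) ^ m * harmonicPhi m / (4 ^ m * ((m.factorial : ℝ)) ^ 2) := by
  simp [bco, Nat.mul_mod_right, Nat.mul_div_cancel_left _ (by norm_num : 0 < 2)]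

lemma bco_odd (m : ℕ) : bco (2 * m + 1) = 0 := by
  simp [bco, Nat.mul_add_mod]

lemma aco_one : aco 1 = 0 := by simpa using aco_odd 0
lemma bco_one : bco 1 = 0 := by simpa using bco_odd 0

lemma harmonicPhi_nonneg (n : ℕ) : 0 ≤ harmonicPhi n := by
  unfold harmonicPhi
  positivity

lemma harmonicPhi_le (n : ℕ) : harmonicPhi n ≤ n := by
  unfold harmonicPhi
  calc ∑ m ∈ Finset.range n, (1 : ℝ) / (m + 1) ≤ ∑ m ∈ Finset.range n, (1 : ℝ) := by
        apply Finset.sum_le_sum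
        intro m _
        rw [div_le_one (by positivity)]
        have : (0 : ℝ) ≤ m := Nat.cast_nonneg m
        linarith
    _ = n := by simp

lemma harmonicPhi_succ (m : ℕ) :
    harmonicPhi (m + 1) = harmonicPhi m + 1 / (m + 1) := by
  unfold harmonicPhi
  rw [Finset.sum_range_succ]

/-- Key coefficient recurrence for `J₀`: `(n+2)² a(n+2) + a n = 0`. -/
lemma key_a (n : ℕ) : ((n : ℝ) + 2) ^ 2 * aco (n + 2) + aco n = 0 := by
  rcases Nat.even_or_odd n with ⟨m, rfl⟩ | ⟨m, rfl⟩
  · have h1 : m + m = 2 * m := by ring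
    have h2 : 2 * m + 2 = 2 * (m + 1) := by ring
    rw [h1, h2, aco_two_mul, aco_two_mul]
    have hf : ((m + 1).factorial : ℝ) = (m + 1) * (m.factorial : ℝ) := by
      push_cast [Nat.factorial_succ]; ring
    have hm : (m.factorial : ℝ) ≠ 0 := Nat.cast_ne_zero.2 m.factorial_ne_zero
    have h4 : (4 : ℝ) ^ m ≠ 0 := by positivity
    have hm1 : ((m : ℝ) + 1) ≠ 0 := by positivity
    rw [hf, pow_succ, pow_succ]
    push_cast
    field_simp
    ring
  · have h2 : 2 * m + 1 + 2 = 2 * (m + 1) + 1 := by ring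
    rw [h2, aco_odd, aco_odd]
    ring

/-- Key coefficient recurrence for the companion series:
`(n+2)² b(n+2) + b n = 2(n+2) a(n+2)`. -/
lemma key_b (n : ℕ) :
    ((n : ℝ) + 2) ^ 2 * bco (n + 2) + bco n = 2 * ((n : ℝ) + 2) * aco (n + 2) := by
  rcases Nat.even_or_odd n with ⟨m, rfl⟩ | ⟨m, rfl⟩
  · have h1 : m + m = 2 * m := by ring
    have h2 : 2 * m + 2 = 2 * (m + 1) := by ring
    rw [h1, h2, bco_two_mul, bco_two_mul, aco_two_mul, harmonicPhi_succ]
    have hf : ((m + 1).factorial : ℝ) = (m + 1) * (m.factorial : ℝ) := by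
      push_cast [Nat.factorial_succ]; ring
    have hm : (m.factorial : ℝ) ≠ 0 := Nat.cast_ne_zero.2 m.factorial_ne_zero
    have h4 : (4 : ℝ) ^ m ≠ 0 := by positivity
    have hm1 : ((m : ℝ) + 1) ≠ 0 := by positivity
    rw [hf, pow_succ, pow_succ]
    push_cast
    field_simp
    ring
  · have h2 : 2 * m + 1 + 2 = 2 * (m + 1) + 1 := by ring
    rw [h2, bco_odd, bco_odd, aco_odd]
    ring

/-- Coefficients are "good" if the series `∑ |cₙ| (n+1) rⁿ` converges for every `r ≥ 1`. -/
def GoodC (c : ℕ → ℝ) : Prop :=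
  ∀ r : ℝ, 1 ≤ r → Summable fun n : ℕ => |c n| * ((n : ℝ) + 1) * r ^ n

/-- Derivative coefficient sequence. -/
noncomputable def dco (c : ℕ → ℝ) (n : ℕ) : ℝ := ((n : ℝ) + 1) * c (n + 1)

/-- The entire function determined by a coefficient sequence. -/
noncomputable def pfun (c : ℕ → ℝ) (x : ℝ) : ℝ := ∑' n : ℕ, c n * x ^ n

lemma summable_M (r : ℝ) (hr : 0 ≤ r) :
    Summable (fun n : ℕ => ((n : ℝ) + 1) * r ^ n / ((n / 2).factorial : ℝ)) := by
  have hpow : ∀ k : ℕ, (k : ℝ) < 4 ^ k := fun k => by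
    exact_mod_cast Nat.lt_pow_self (n := k) (by norm_num)
  have hpow1 : ∀ k : ℕ, (1 : ℝ) ≤ 4 ^ k := fun k => one_le_pow₀ (by norm_num)
  apply Summable.even_add_odd
  · apply Summable.of_nonneg_of_le _ _ ((Real.summable_pow_div_factorial (4 * r ^ 2)).mul_left 3)
    · intro k; positivity
    · intro k
      rw [Nat.mul_div_cancel_left _ (by norm_num : 0 < 2)]
      rw [← mul_div_assoc]
      apply div_le_div_of_nonneg_right ?_ (by positivity)
      have hc : 2 * (k : ℝ) + 1 ≤ 3 * 4 ^ k := by nlinarith [hpow k, hpow1 k]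
      have hnn : (0 : ℝ) ≤ (r ^ 2) ^ k := pow_nonneg (sq_nonneg r) k
      rw [pow_mul, mul_pow]
      push_cast
      nlinarith [mul_le_mul_of_nonneg_right hc hnn]
  · apply Summable.of_nonneg_of_le _ _
      ((Real.summable_pow_div_factorial (4 * r ^ 2)).mul_left (4 * (r + 1)))
    · intro k; positivity
    · intro k
      have hk : (2 * k + 1) / 2 = k := by omega
      rw [hk, ← mul_div_assoc]
      apply div_le_div_of_nonneg_right ?_ (by positivity)
      have hc : (2 * (k : ℝ) + 2) * r ≤ 4 * 4 ^ k * (r + 1) := by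
        nlinarith [hpow k, hpow1 k, hr]
      have hnn : (0 : ℝ) ≤ (r ^ 2) ^ k := pow_nonneg (sq_nonneg r) k
      rw [pow_succ, pow_mul, mul_pow]
      push_cast
      nlinarith [mul_le_mul_of_nonneg_right hc hnn]


lemma good_of_le {c : ℕ → ℝ} (h : ∀ n, |c n| ≤ 1 / ((n / 2).factorial : ℝ)) : GoodC c := by
  intro r hr
  apply Summable.of_nonneg_of_le _ _ (summable_M r (by linarith))
  · intro n; positivity
  · intro n
    have h1 : |c n| * ((n : ℝ) + 1) * r ^ n
        ≤ (1 / ((n / 2).factorial : ℝ)) * ((n : ℝ) + 1) * r ^ n := by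
      have hrn : (0 : ℝ) ≤ r ^ n := by positivity
      have hn1 : (0 : ℝ) ≤ (n : ℝ) + 1 := by positivity
      exact mul_le_mul_of_nonneg_right (mul_le_mul_of_nonneg_right (h n) hn1) hrn
    calc |c n| * ((n : ℝ) + 1) * r ^ n
        ≤ (1 / ((n / 2).factorial : ℝ)) * ((n : ℝ) + 1) * r ^ n := h1
      _ = ((n : ℝ) + 1) * r ^ n / ((n / 2).factorial : ℝ) := by ring

lemma good_aco : GoodC aco := by
  apply good_of_le
  intro n
  rcases Nat.even_or_odd n with ⟨m, rfl⟩ | ⟨m, rfl⟩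
  · have h1 : m + m = 2 * m := by ring
    rw [h1, aco_two_mul, Nat.mul_div_cancel_left _ (by norm_num : 0 < 2)]
    have hf1 : (1 : ℝ) ≤ (m.factorial : ℝ) := by exact_mod_cast m.factorial_pos
    have h41 : (1 : ℝ) ≤ (4 : ℝ) ^ m := one_le_pow₀ (by norm_num)
    rw [abs_div, abs_pow, abs_neg, abs_one, one_pow,
      abs_of_pos (show (0:ℝ) < 4 ^ m * (m.factorial : ℝ) ^ 2 by positivity)]
    apply one_div_le_one_div_of_le (by positivity)
    nlinarith
  · have h2 : (2 * m + 1) / 2 = m := by omega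
    rw [aco_odd, h2, abs_zero]
    positivity

lemma good_bco : GoodC bco := by
  apply good_of_le
  intro n
  rcases Nat.even_or_odd n with ⟨m, rfl⟩ | ⟨m, rfl⟩
  · have h1 : m + m = 2 * m := by ring
    rw [h1, bco_two_mul, Nat.mul_div_cancel_left _ (by norm_num : 0 < 2)]
    have hf1 : (1 : ℝ) ≤ (m.factorial : ℝ) := by exact_mod_cast m.factorial_pos
    have h41 : (1 : ℝ) ≤ (4 : ℝ) ^ m := one_le_pow₀ (by norm_num)
    have hm4 : ((m : ℝ)) < 4 ^ m := by
      exact_mod_cast Nat.lt_pow_self (n := m) (by norm_num)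
    have hphi0 := harmonicPhi_nonneg m
    have hphi := harmonicPhi_le m
    rw [abs_div, abs_mul, abs_pow, abs_neg, abs_one, one_pow, one_mul,
      abs_of_nonneg hphi0,
      abs_of_pos (show (0:ℝ) < 4 ^ m * (m.factorial : ℝ) ^ 2 by positivity)]
    rw [div_le_div_iff₀ (by positivity) (by positivity), one_mul, sq]
    have e1 : harmonicPhi m * (m.factorial : ℝ) ≤ (m : ℝ) * (m.factorial : ℝ) :=
      mul_le_mul_of_nonneg_right hphi (by positivity)
    have e2 : (m : ℝ) * (m.factorial : ℝ) ≤ 4 ^ m * (m.factorial : ℝ) :=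
      mul_le_mul_of_nonneg_right (le_of_lt hm4) (by positivity)
    nlinarith [e1, e2, mul_le_mul_of_nonneg_left hf1
      (show (0:ℝ) ≤ (4:ℝ) ^ m * (m.factorial : ℝ) by positivity)]
  · have h2 : (2 * m + 1) / 2 = m := by omega
    rw [bco_odd, h2, abs_zero]
    positivity

lemma good_dco {c : ℕ → ℝ} (hc : GoodC c) : GoodC (dco c) := by
  intro r hr
  have hr0 : (0 : ℝ) < r := by linarith
  have h2 := hc (2 * r) (by linarith)
  have h2' : Summable (fun n : ℕ => |c (n + 1)| * ((n : ℝ) + 2) * (2 * r) ^ (n + 1)) := by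
    have h := (summable_nat_add_iff 1).2 h2
    apply h.congr
    intro n
    push_cast
    ring
  apply Summable.of_nonneg_of_le _ _ (h2'.mul_left ((2 * r)⁻¹))
  · intro n; positivity
  · intro n
    have hA : (0 : ℝ) ≤ |c (n + 1)| := abs_nonneg _
    have hp : (0 : ℝ) ≤ r ^ n := by positivity
    have hn : ((n : ℝ) + 1) ≤ 2 ^ n := by exact_mod_cast Nat.lt_two_pow_self (n := n)
    have habs : |dco c n| = ((n : ℝ) + 1) * |c (n + 1)| := by
      rw [dco, abs_mul, abs_of_pos (by positivity : (0:ℝ) < (n : ℝ) + 1)]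
    have e1 : ((n : ℝ) + 1) * ((n : ℝ) + 1) ≤ ((n : ℝ) + 2) * 2 ^ n := by
      have hn0 : (0 : ℝ) ≤ (n : ℝ) := Nat.cast_nonneg n
      nlinarith [hn]
    calc |dco c n| * ((n : ℝ) + 1) * r ^ n
        = (((n : ℝ) + 1) * ((n : ℝ) + 1)) * (|c (n + 1)| * r ^ n) := by rw [habs]; ring
      _ ≤ (((n : ℝ) + 2) * 2 ^ n) * (|c (n + 1)| * r ^ n) :=
          mul_le_mul_of_nonneg_right e1 (mul_nonneg hA hp)
      _ = (2 * r)⁻¹ * (|c (n + 1)| * ((n : ℝ) + 2) * (2 * r) ^ (n + 1)) := by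
          rw [pow_succ, mul_pow]
          field_simp

lemma summable_psum {c : ℕ → ℝ} (hc : GoodC c) (x : ℝ) :
    Summable fun n : ℕ => c n * x ^ n := by
  set R := max 1 |x| with hRdef
  apply Summable.of_norm_bounded (hc R (le_max_left _ _))
  intro n
  rw [norm_mul, norm_pow, Real.norm_eq_abs, Real.norm_eq_abs]
  have h1 : |x| ^ n ≤ R ^ n := pow_le_pow_left₀ (abs_nonneg x) (le_max_right _ _) n
  have hR0 : (0 : ℝ) ≤ R ^ n := by positivity
  have hc0 : (0 : ℝ) ≤ |c n| := abs_nonneg _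
  calc |c n| * |x| ^ n ≤ |c n| * R ^ n := mul_le_mul_of_nonneg_left h1 hc0
    _ ≤ |c n| * ((n : ℝ) + 1) * R ^ n := by
        nlinarith [mul_nonneg (mul_nonneg hc0 hR0) (Nat.cast_nonneg (α := ℝ) n)]

lemma hasDerivAt_pfun {c : ℕ → ℝ} (hc : GoodC c) (x : ℝ) :
    HasDerivAt (pfun c) (pfun (dco c) x) x := by
  set R := |x| + 1 with hRdef
  have hR : (1 : ℝ) ≤ R := by rw [hRdef]; linarith [abs_nonneg x]
  have hsum := hc R hR
  have hball : x ∈ Metric.ball (0 : ℝ) R := by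
    simp only [Metric.mem_ball, dist_zero_right, Real.norm_eq_abs, hRdef]
    linarith
  have hbound : ∀ (n : ℕ), ∀ y ∈ Metric.ball (0 : ℝ) R,
      ‖c n * ((n : ℝ) * y ^ (n - 1))‖ ≤ |c n| * ((n : ℝ) + 1) * R ^ n := by
    intro n y hy
    have hyR : |y| ≤ R := by
      simp only [Metric.mem_ball, dist_zero_right, Real.norm_eq_abs] at hy
      linarith
    rw [norm_mul, norm_mul, norm_pow, Real.norm_eq_abs, Real.norm_eq_abs, Real.norm_eq_abs]
    cases n with
    | zero => simp
    | succ m =>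
      have h1 : |y| ^ (m + 1 - 1) ≤ R ^ m :=
        pow_le_pow_left₀ (abs_nonneg y) hyR m
      have h2 : R ^ m ≤ R ^ (m + 1) := pow_le_pow_right₀ (by linarith) (by omega)
      have h3 : |((m : ℝ) + 1)| = (m : ℝ) + 1 := abs_of_pos (by positivity)
      push_cast
      rw [h3]
      have hc0 : (0 : ℝ) ≤ |c (m + 1)| := abs_nonneg _
      have hm0 : (0 : ℝ) ≤ (m : ℝ) + 1 := by positivity
      have hRp : (0 : ℝ) ≤ R ^ (m + 1) := by positivity
      have h12 : |y| ^ (m + 1 - 1) ≤ R ^ (m + 1) := le_trans h1 h2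
      calc |c (m + 1)| * (((m : ℝ) + 1) * |y| ^ (m + 1 - 1))
          ≤ |c (m + 1)| * (((m : ℝ) + 1) * R ^ (m + 1)) :=
            mul_le_mul_of_nonneg_left (mul_le_mul_of_nonneg_left h12 hm0) hc0
        _ ≤ |c (m + 1)| * ((m : ℝ) + 1 + 1) * R ^ (m + 1) := by
            nlinarith [mul_nonneg hc0 hRp]
  have hder : HasDerivAt (fun z => ∑' n : ℕ, c n * z ^ n)
      (∑' n : ℕ, c n * ((n : ℝ) * x ^ (n - 1))) x := by
    apply hasDerivAt_tsum_of_isPreconnected hsum Metric.isOpen_ball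
      (convex_ball 0 R).isPreconnected
      (fun n y _ => (hasDerivAt_pow n y).const_mul (c n))
      hbound hball (summable_psum hc x) hball
  have hs2 : Summable (fun n : ℕ => c n * ((n : ℝ) * x ^ (n - 1))) :=
    Summable.of_norm_bounded hsum (fun n => hbound n x hball)
  have heq : pfun (dco c) x = ∑' n : ℕ, c n * ((n : ℝ) * x ^ (n - 1)) := by
    rw [pfun, Summable.tsum_eq_zero_add hs2]
    simp only [Nat.cast_zero, zero_mul, mul_zero, zero_add]
    apply tsum_congr
    intro n
    rw [dco]
    push_cast
    ring
  rw [heq]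
  exact hder

lemma pfun_aco_eq (x : ℝ) : pfun aco x = besselJ0 x := by
  rw [besselJ0, pfun]
  have hsm := summable_psum good_aco x
  have hinj2 : Function.Injective (fun k : ℕ => 2 * k) := fun a b h => by
    dsimp at h; omega
  have hinj2' : Function.Injective (fun k : ℕ => 2 * k + 1) := fun a b h => by
    dsimp at h; omega
  have he : Summable (fun k : ℕ => aco (2 * k) * x ^ (2 * k)) := hsm.comp_injective hinj2
  have ho : Summable (fun k : ℕ => aco (2 * k + 1) * x ^ (2 * k + 1)) :=
    hsm.comp_injective hinj2'
  have key := tsum_even_add_odd (f := fun n : ℕ => aco n * x ^ n) he ho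
  rw [← key]
  have h0 : ∑' k : ℕ, aco (2 * k + 1) * x ^ (2 * k + 1) = 0 := by
    simp [aco_odd]
  rw [h0, add_zero]
  apply tsum_congr
  intro k
  show aco (2 * k) * x ^ (2 * k) = _
  rw [aco_two_mul]
  have h4 : (2 : ℝ) ^ (2 * k) = 4 ^ k := by rw [pow_mul]; norm_num
  rw [h4]
  ring

lemma pfun_bco_eq (x : ℝ) :
    pfun bco x = ∑' n : ℕ, (-1 : ℝ) ^ n * harmonicPhi n * x ^ (2 * n) /
      (2 ^ (2 * n) * ((n.factorial : ℝ)) ^ 2) := by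
  rw [pfun]
  have hsm := summable_psum good_bco x
  have hinj2 : Function.Injective (fun k : ℕ => 2 * k) := fun a b h => by
    dsimp at h; omega
  have hinj2' : Function.Injective (fun k : ℕ => 2 * k + 1) := fun a b h => by
    dsimp at h; omega
  have he : Summable (fun k : ℕ => bco (2 * k) * x ^ (2 * k)) := hsm.comp_injective hinj2
  have ho : Summable (fun k : ℕ => bco (2 * k + 1) * x ^ (2 * k + 1)) :=
    hsm.comp_injective hinj2'
  have key := tsum_even_add_odd (f := fun n : ℕ => bco n * x ^ n) he ho
  rw [← key]
  have h0 : ∑' k : ℕ, bco (2 * k + 1) * x ^ (2 * k + 1) = 0 := by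
    simp [bco_odd]
  rw [h0, add_zero]
  apply tsum_congr
  intro k
  show bco (2 * k) * x ^ (2 * k) = _
  rw [bco_two_mul]
  have h4 : (2 : ℝ) ^ (2 * k) = 4 ^ k := by rw [pow_mul]; norm_num
  rw [h4]
  ring

lemma besselY0_eq (x : ℝ) :
    besselY0 x = (2 / Real.pi) *
      ((Real.log (x / 2) + Real.eulerMascheroniConstant) * pfun aco x - pfun bco x) := by
  rw [besselY0, pfun_aco_eq, pfun_bco_eq]

lemma ode_combo {c : ℕ → ℝ} (hc : GoodC c) (x : ℝ) :
    x * pfun (dco (dco c)) x + pfun (dco c) x + x * pfun c x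
      = dco c 0 + ∑' n : ℕ, (((n : ℝ) + 2) ^ 2 * c (n + 2) + c n) * x ^ (n + 1) := by
  have h0 := summable_psum hc x
  have h1 := summable_psum (good_dco hc) x
  have h2 := summable_psum (good_dco (good_dco hc)) x
  have hs2 : Summable (fun n : ℕ => dco (dco c) n * x ^ (n + 1)) :=
    (h2.mul_right x).congr fun n => by ring
  have hs1' : Summable (fun n : ℕ => dco c (n + 1) * x ^ (n + 1)) :=
    (summable_nat_add_iff 1).2 h1
  have hs0 : Summable (fun n : ℕ => c n * x ^ (n + 1)) :=
    (h0.mul_right x).congr fun n => by ring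
  unfold pfun
  rw [Summable.tsum_eq_zero_add h1]
  have e2 : x * ∑' n : ℕ, dco (dco c) n * x ^ n = ∑' n : ℕ, dco (dco c) n * x ^ (n + 1) := by
    rw [← tsum_mul_left]; exact tsum_congr fun n => by ring
  have e0 : x * ∑' n : ℕ, c n * x ^ n = ∑' n : ℕ, c n * x ^ (n + 1) := by
    rw [← tsum_mul_left]; exact tsum_congr fun n => by ring
  rw [e2, e0]
  have ecomb : ∑' n : ℕ, (((n : ℝ) + 2) ^ 2 * c (n + 2) + c n) * x ^ (n + 1)
      = ∑' n : ℕ, ((dco (dco c) n * x ^ (n + 1) + dco c (n + 1) * x ^ (n + 1))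
          + c n * x ^ (n + 1)) := by
    apply tsum_congr
    intro n
    unfold dco
    push_cast
    ring
  rw [ecomb, Summable.tsum_add (hs2.add hs1') hs0, Summable.tsum_add hs2 hs1']
  simp only [pow_zero, mul_one]
  ring

lemma ode_a (x : ℝ) :
    x * pfun (dco (dco aco)) x + pfun (dco aco) x + x * pfun aco x = 0 := by
  rw [ode_combo good_aco x]
  have h0 : dco aco 0 = 0 := by simp [dco, aco_one]
  have hz : ∀ n : ℕ, (((n : ℝ) + 2) ^ 2 * aco (n + 2) + aco n) * x ^ (n + 1) = 0 :=
    fun n => by rw [key_a]; ring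
  rw [h0, tsum_congr hz, tsum_zero]
  ring

lemma ode_b (x : ℝ) :
    x * pfun (dco (dco bco)) x + pfun (dco bco) x + x * pfun bco x
      = 2 * pfun (dco aco) x := by
  rw [ode_combo good_bco x]
  have h0 : dco bco 0 = 0 := by simp [dco, bco_one]
  have h1 := summable_psum (good_dco good_aco) x
  have hz : ∀ n : ℕ, (((n : ℝ) + 2) ^ 2 * bco (n + 2) + bco n) * x ^ (n + 1)
      = 2 * (dco aco (n + 1) * x ^ (n + 1)) := by
    intro n
    rw [key_b]
    unfold dco
    push_cast
    ring
  rw [h0, tsum_congr hz, tsum_mul_left, zero_add]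
  have h2 : pfun (dco aco) x = ∑' n : ℕ, dco aco (n + 1) * x ^ (n + 1) := by
    rw [pfun, Summable.tsum_eq_zero_add h1]
    simp [dco, aco_one]
  rw [h2]

/-- First derivative of `besselY0`. -/
noncomputable def Yone (x : ℝ) : ℝ :=
  (2 / Real.pi) * (x⁻¹ * pfun aco x +
    (Real.log (x / 2) + Real.eulerMascheroniConstant) * pfun (dco aco) x - pfun (dco bco) x)

/-- Second derivative of `besselY0`. -/
noncomputable def Ytwo (x : ℝ) : ℝ :=
  (2 / Real.pi) * (-(x ^ 2)⁻¹ * pfun aco x + x⁻¹ * pfun (dco aco) x +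
    (x⁻¹ * pfun (dco aco) x +
      (Real.log (x / 2) + Real.eulerMascheroniConstant) * pfun (dco (dco aco)) x) -
    pfun (dco (dco bco)) x)

lemma hasDerivAt_L (x : ℝ) (hx : x ≠ 0) :
    HasDerivAt (fun y : ℝ => Real.log (y / 2) + Real.eulerMascheroniConstant) x⁻¹ x := by
  have h1 : HasDerivAt (fun y : ℝ => y / 2) (1 / 2) x := by
    simpa using (hasDerivAt_id x).div_const 2
  have h2 : x / 2 ≠ 0 := div_ne_zero hx two_ne_zero
  have h5 : HasDerivAt (fun y : ℝ => Real.log (y / 2)) x⁻¹ x := by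
    have h3 : HasDerivAt (fun y : ℝ => Real.log (y / 2)) ((x / 2)⁻¹ * (1 / 2)) x :=
      by have := (Real.hasDerivAt_log h2).comp x h1; exact this
    have h4 : (x / 2)⁻¹ * (1 / 2) = x⁻¹ := by field_simp
    rwa [h4] at h3
  exact h5.add_const _

lemma hasDerivAt_besselY0 (x : ℝ) (hx : x ≠ 0) : HasDerivAt besselY0 (Yone x) x := by
  have hEq : besselY0 = fun y => (2 / Real.pi) *
      ((Real.log (y / 2) + Real.eulerMascheroniConstant) * pfun aco y - pfun bco y) :=
    funext besselY0_eq
  rw [hEq]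
  exact (((hasDerivAt_L x hx).mul (hasDerivAt_pfun good_aco x)).sub
    (hasDerivAt_pfun good_bco x)).const_mul (2 / Real.pi)

lemma hasDerivAt_Yone (x : ℝ) (hx : x ≠ 0) : HasDerivAt Yone (Ytwo x) x := by
  show HasDerivAt (fun y => (2 / Real.pi) * (y⁻¹ * pfun aco y +
    (Real.log (y / 2) + Real.eulerMascheroniConstant) * pfun (dco aco) y -
      pfun (dco bco) y)) (Ytwo x) x
  exact ((((hasDerivAt_inv hx).mul (hasDerivAt_pfun good_aco x)).add
    ((hasDerivAt_L x hx).mul (hasDerivAt_pfun (good_dco good_aco) x))).sub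
    (hasDerivAt_pfun (good_dco good_bco) x)).const_mul (2 / Real.pi)

end BesselAux


open BesselAux in
/-- Weber's Bessel function of order zero `Y₀` is well defined (its defining series
converges) and twice differentiable on `(0,∞)`, and satisfies Bessel's equation of
order zero: `x Y₀''(x) + Y₀'(x) + x Y₀(x) = 0` for all `x > 0`. -/
theorem besselY0_wellDefined_and_ode :
    (∀ x ∈ Set.Ioi (0 : ℝ), Summable fun n : ℕ =>
      (-1 : ℝ) ^ n * harmonicPhi n * x ^ (2 * n) / (2 ^ (2 * n) * ((n.factorial : ℝ)) ^ 2)) ∧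
    (∀ x ∈ Set.Ioi (0 : ℝ), DifferentiableAt ℝ besselY0 x) ∧
    (∀ x ∈ Set.Ioi (0 : ℝ), DifferentiableAt ℝ (deriv besselY0) x) ∧
    (∀ x ∈ Set.Ioi (0 : ℝ),
      x * deriv (deriv besselY0) x + deriv besselY0 x + x * besselY0 x = 0) := by
  have hDerivEq : ∀ x : ℝ, 0 < x → deriv besselY0 =ᶠ[nhds x] Yone := by
    intro x hx
    filter_upwards [Ioi_mem_nhds hx] with y hy
    exact (hasDerivAt_besselY0 y (ne_of_gt hy)).deriv
  refine ⟨?_, ?_, ?_, ?_⟩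
  · intro x _
    have hsm := summable_psum good_bco x
    have hinj2 : Function.Injective (fun k : ℕ => 2 * k) := fun a b h => by
      dsimp at h; omega
    have he : Summable (fun k : ℕ => bco (2 * k) * x ^ (2 * k)) := hsm.comp_injective hinj2
    apply he.congr
    intro k
    show bco (2 * k) * x ^ (2 * k) = _
    rw [bco_two_mul]
    have h4 : (2 : ℝ) ^ (2 * k) = 4 ^ k := by rw [pow_mul]; norm_num
    rw [h4]
    ring
  · intro x hx
    exact (hasDerivAt_besselY0 x (ne_of_gt (Set.mem_Ioi.1 hx))).differentiableAt
  · intro x hx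
    have hx0 := Set.mem_Ioi.1 hx
    rw [(hDerivEq x hx0).differentiableAt_iff]
    exact (hasDerivAt_Yone x (ne_of_gt hx0)).differentiableAt
  · intro x hx
    have hx0 := Set.mem_Ioi.1 hx
    have hne : x ≠ 0 := ne_of_gt hx0
    have hd1 : deriv besselY0 x = Yone x := (hasDerivAt_besselY0 x hne).deriv
    have hd2 : deriv (deriv besselY0) x = Ytwo x := by
      rw [(hDerivEq x hx0).deriv_eq]
      exact (hasDerivAt_Yone x hne).deriv
    rw [hd1, hd2, besselY0_eq x]
    have hI := ode_a x
    have hII := ode_b x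
    have main : x * Ytwo x + Yone x + x * ((2 / Real.pi) *
          ((Real.log (x / 2) + Real.eulerMascheroniConstant) * pfun aco x - pfun bco x))
        = (2 / Real.pi) *
          ((Real.log (x / 2) + Real.eulerMascheroniConstant) *
              (x * pfun (dco (dco aco)) x + pfun (dco aco) x + x * pfun aco x)
            + 2 * (x * x⁻¹) * pfun (dco aco) x
            - (x * pfun (dco (dco bco)) x + pfun (dco bco) x + x * pfun bco x)
            + (x⁻¹ - x * (x ^ 2)⁻¹) * pfun aco x) := by
      rw [Yone, Ytwo]
      ring
    rw [main, hI, hII, mul_inv_cancel₀ hne]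
    have hz : x⁻¹ - x * (x ^ 2)⁻¹ = 0 := by field_simp; ring
    rw [hz]
    ring
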